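/- Let S be a numerical set with S ≠ ℕ. Then the genus of its complement satisfies g(S̃) = g(S) + B(S) − F(S). -/
import Mathlib


open Set

def IsNumericalSet (S : Set ℕ) : Prop := 0 ∈ S ∧ Sᶜ.Finite

def IsNumericalSemigroup (S : Set ℕ) : Prop :=
  IsNumericalSet S ∧ ∀ a ∈ S, ∀ b ∈ S, a + b ∈ S

/-- The associated set `A(S) = {s ∈ S : s + S ⊆ S}`. -/
def A (S : Set ℕ) : Set ℕ := {s ∈ S | ∀ t ∈ S, s + t ∈ S}

/-- The Frobenius number: the largest gap of `S`. -/
noncomputable def F (S : Set ℕ) : ℕ := sSup Sᶜ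

/-- The base: the largest element of `S` below `F S`. -/
noncomputable def B (S : Set ℕ) : ℕ := sSup {s | s ∈ S ∧ s < F S}

/-- The multiplicity: the smallest positive element of `S`. -/
noncomputable def m (S : Set ℕ) : ℕ := sInf {s | s ∈ S ∧ 0 < s}

/-- The complement numerical set (for `S ≠ ℕ`). -/
noncomputable def Stilde (S : Set ℕ) : Set ℕ :=
  {x | ∃ s ∈ S, s ≤ B S ∧ x = B S - s} ∪ {n | B S ≤ n}

-- The complement operation, with the convention that the complement of ℕ is ℕ.
open Classical in
noncomputable def complOp (S : Set ℕ) : Set ℕ :=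
  if S = Set.univ then Set.univ else Stilde S

/-- The genus: the number of gaps. -/
noncomputable def genus (S : Set ℕ) : ℕ := Sᶜ.ncard

/-- The number of boxes with hook length 1. -/
noncomputable def c1 (S : Set ℕ) : ℕ := {n | n ∈ S ∧ n + 1 ∉ S}.ncard

/-- An atom: a positive element not a sum of two positive elements. -/
def IsAtomOf (S : Set ℕ) (a : ℕ) : Prop :=
  a ∈ S ∧ 0 < a ∧ ¬ ∃ x ∈ S, ∃ y ∈ S, 0 < x ∧ 0 < y ∧ a = x + y

/-- A small atom: an atom smaller than the Frobenius number. -/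
def IsSmallAtom (S : Set ℕ) (a : ℕ) : Prop := IsAtomOf S a ∧ a < F S

/-- The embedding dimension: the number of atoms. -/
noncomputable def numAtoms (S : Set ℕ) : ℕ := {a | IsAtomOf S a}.ncard

/-- Maximal embedding dimension. -/
def MaxED (S : Set ℕ) : Prop := numAtoms S = m S


theorem genus_of_complement (S : Set ℕ) (hS : IsNumericalSet S) (hne : S ≠ Set.univ) :
    (genus (Stilde S) : ℤ) = (genus S : ℤ) + (B S : ℤ) - (F S : ℤ) := by
  have hfin : Sᶜ.Finite := hS.2
  have h0 : 0 ∈ S := hS.1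
  have hcne : Sᶜ.Nonempty := Set.nonempty_compl.mpr hne
  have hF_mem : F S ∈ Sᶜ := Nat.sSup_mem hcne hfin.bddAbove
  have hF_ub : ∀ t, t ∉ S → t ≤ F S := fun t ht => le_csSup hfin.bddAbove ht
  have hFpos : 0 < F S :=
    Nat.pos_of_ne_zero fun h => hF_mem (by rw [h]; exact h0)
  have hBbdd : BddAbove {s | s ∈ S ∧ s < F S} := ⟨F S, fun s hs => hs.2.le⟩
  have hBne : {s | s ∈ S ∧ s < F S}.Nonempty := ⟨0, h0, hFpos⟩
  have hB_mem : B S ∈ S ∧ B S < F S := Nat.sSup_mem hBne hBbdd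
  have hB_ub : ∀ s, s ∈ S → s < F S → s ≤ B S := fun s hs hlt =>
    le_csSup hBbdd ⟨hs, hlt⟩
  -- gaps of Stilde
  have hcompl : (Stilde S)ᶜ = (fun t => B S - t) '' {t | t ∉ S ∧ t ≤ B S} := by
    ext x
    rw [Set.mem_compl_iff]
    have hmem : x ∈ Stilde S ↔ (∃ s ∈ S, s ≤ B S ∧ x = B S - s) ∨ B S ≤ x :=
      Iff.rfl
    rw [hmem]
    push_neg
    simp only [Set.mem_image, Set.mem_setOf_eq]
    constructor
    · rintro ⟨hnex, hxB⟩
      refine ⟨B S - x, ⟨?_, Nat.sub_le _ _⟩, by omega⟩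
      intro hmemS
      exact hnex _ hmemS (Nat.sub_le _ _) (by omega)
    · rintro ⟨t, ⟨htS, htB⟩, rfl⟩
      have ht0 : t ≠ 0 := fun h => htS (h ▸ h0)
      have htB' : t ≠ B S := fun h => htS (h ▸ hB_mem.1)
      refine ⟨fun s hsS hsB heq => ?_, by omega⟩
      have : s = t := by omega
      exact htS (this ▸ hsS)
  have hinj : Set.InjOn (fun t => B S - t) {t | t ∉ S ∧ t ≤ B S} := by
    intro a ha b hb h
    simp only [Set.mem_setOf_eq] at ha hb
    dsimp only at h
    omega
  have hsub : {t | t ∉ S ∧ t ≤ B S} ⊆ Sᶜ := fun t ht => ht.1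
  have hfin2 : {t | t ∉ S ∧ t ≤ B S}.Finite := hfin.subset hsub
  have hg1 : genus (Stilde S) = {t | t ∉ S ∧ t ≤ B S}.ncard := by
    rw [genus, hcompl, Set.ncard_image_of_injOn hinj]
  -- split gaps of S
  have hsplit : Sᶜ = {t | t ∉ S ∧ t ≤ B S} ∪ Set.Ioc (B S) (F S) := by
    ext t
    simp only [Set.mem_compl_iff, Set.mem_union, Set.mem_setOf_eq, Set.mem_Ioc]
    constructor
    · intro ht
      rcases le_or_gt t (B S) with h | h
      · exact Or.inl ⟨ht, h⟩
      · exact Or.inr ⟨h, hF_ub t ht⟩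
    · rintro (⟨ht, _⟩ | ⟨hBt, htF⟩)
      · exact ht
      · intro htS
        have : t ≠ F S := fun h => hF_mem (h ▸ htS)
        have : t < F S := lt_of_le_of_ne htF this
        exact absurd (hB_ub t htS this) (not_le.mpr hBt)
  have hdisj : Disjoint {t | t ∉ S ∧ t ≤ B S} (Set.Ioc (B S) (F S)) := by
    rw [Set.disjoint_left]
    rintro t ⟨_, htB⟩ ⟨hBt, _⟩
    omega
  have hIoc : (Set.Ioc (B S) (F S)).ncard = F S - B S := by
    rw [show Set.Ioc (B S) (F S) = ↑(Finset.Ioc (B S) (F S)) from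
      (Finset.coe_Ioc _ _).symm, Set.ncard_coe_finset, Nat.card_Ioc]
  have hg2 : genus S = {t | t ∉ S ∧ t ≤ B S}.ncard + (F S - B S) := by
    rw [genus, hsplit, Set.ncard_union_eq hdisj hfin2 (Set.finite_Ioc _ _), hIoc]
  have hBF : B S < F S := hB_mem.2
  rw [hg1, hg2]
  omega
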